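/- Let V ∈ L¹(ℝ) with X^{α}V ∈ L¹(ℝ), α ≥ 0, and b > 0. Then L^α ∫₀^b s^α e^{−Ls} 𝒱_L(s) ds → 0 as L → ∞, where 𝒱_L(s) = ∫_{−L}^{L} |V(x)| e^{s|x|} dx. -/

import Mathlib

open MeasureTheory

/-- For `V ∈ L¹(ℝ)` with `∫ |x|^α |V(x)| dx < ∞` (`α ≥ 0`), `b > 0`, and
`𝒱_L(s) = ∫_{−L}^L |V(x)| e^{s|x|} dx`, one has
`L^α ∫₀^b s^α e^{−Ls} 𝒱_L(s) ds → 0` as `L → ∞`. -/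
theorem stmt12 (V : ℝ → ℂ) (α : ℝ) (hα : 0 ≤ α) (b : ℝ) (hb : 0 < b)
    (hV : Integrable V)
    (hXV : Integrable (fun x => |x| ^ α * ‖V x‖)) :
    Filter.Tendsto
      (fun L : ℝ => L ^ α *
        ∫ s in Set.Ioc (0:ℝ) b, s ^ α * Real.exp (-L * s) *
          ∫ x in Set.Icc (-L) L, ‖V x‖ * Real.exp (s * |x|))
      Filter.atTop (nhds 0) := by
  have hf_nonneg : ∀ x : ℝ, 0 ≤ |x| ^ α * ‖V x‖ := fun x => by positivity
  have hVnorm : Integrable (fun x : ℝ => ‖V x‖) := hV.norm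
  set f : ℝ → ℝ := fun x => |x| ^ α * ‖V x‖ with hf_def
  set A : ℝ := ∫ x : ℝ, ‖V x‖ with hA_def
  have hA : 0 ≤ A := integral_nonneg fun x => norm_nonneg _
  set Γ : ℝ := Real.Gamma (α + 1) with hΓ_def
  have hΓ : 0 < Γ := Real.Gamma_pos_of_pos (by linarith)
  set C : ℝ := 2 ^ α * (b ^ α * b) with hC_def
  have hC : 0 ≤ C := by positivity
  set D : ℝ → ℝ := fun L => (∫ x : ℝ, f x) - ∫ x in (-(L/2))..(L/2), f x with hD_def
  -- the dominating function tends to 0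
  have hD0 : Filter.Tendsto D Filter.atTop (nhds 0) := by
    have h1 : Filter.Tendsto (fun L : ℝ => ∫ x in (-(L/2))..(L/2), f x)
        Filter.atTop (nhds (∫ x : ℝ, f x)) := by
      have hhalf : Filter.Tendsto (fun L : ℝ => L / 2) Filter.atTop Filter.atTop :=
        Filter.Tendsto.atTop_div_const two_pos Filter.tendsto_id
      refine intervalIntegral_tendsto_integral hXV ?_ hhalf
      have hneg := Filter.tendsto_neg_atTop_atBot.comp hhalf
      simpa [Function.comp_def] using hneg
    have := (tendsto_const_nhds (x := ∫ x : ℝ, f x) (f := Filter.atTop)).sub h1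
    simpa using this
  have hG0 : Filter.Tendsto (fun L : ℝ => A * (2 ^ (α+1) * Γ) / L + C * D L)
      Filter.atTop (nhds 0) := by
    have h1 : Filter.Tendsto (fun L : ℝ => A * (2 ^ (α+1) * Γ) / L) Filter.atTop (nhds 0) := by
      simpa [div_eq_mul_inv] using tendsto_inv_atTop_zero.const_mul (A * (2 ^ (α+1) * Γ))
    have h2 := hD0.const_mul C
    simpa using h1.add h2
  refine squeeze_zero' ?_ ?_ hG0
  · filter_upwards [Filter.eventually_ge_atTop (0:ℝ)] with L hL
    refine mul_nonneg (Real.rpow_nonneg hL α) ?_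
    refine setIntegral_nonneg measurableSet_Ioc fun s hs => ?_
    refine mul_nonneg (mul_nonneg (Real.rpow_nonneg hs.1.le α) (Real.exp_pos _).le) ?_
    exact setIntegral_nonneg measurableSet_Icc fun x _ => by positivity
  · filter_upwards [Filter.eventually_ge_atTop (1:ℝ)] with L hL
    have hL0 : 0 < L := lt_of_lt_of_le one_pos hL
    have hLα : 0 ≤ L ^ α := Real.rpow_nonneg hL0.le α
    set tail : Set ℝ := {x : ℝ | L/2 ≤ |x|} with htail_def
    have hmt : MeasurableSet tail :=
      (isClosed_le continuous_const continuous_abs).measurableSet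
    set T : ℝ := ∫ x in tail, f x with hT_def
    have hT0 : 0 ≤ T := setIntegral_nonneg hmt fun x _ => hf_nonneg x
    -- T is bounded by D L
    have hTD : T ≤ D L := by
      have hsub : tail ⊆ (Set.Ioo (-(L/2)) (L/2))ᶜ := by
        intro x hx hmem
        have : |x| < L/2 := abs_lt.2 ⟨hmem.1, hmem.2⟩
        have hx' : L/2 ≤ |x| := hx
        linarith
      have h1 : T ≤ ∫ x in (Set.Ioo (-(L/2)) (L/2))ᶜ, f x := by
        refine setIntegral_mono_set hXV.integrableOn
          (Filter.Eventually.of_forall hf_nonneg) (HasSubset.Subset.eventuallyLE hsub)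
      have h2 : (∫ x in Set.Ioo (-(L/2)) (L/2), f x) +
          ∫ x in (Set.Ioo (-(L/2)) (L/2))ᶜ, f x = ∫ x : ℝ, f x :=
        integral_add_compl measurableSet_Ioo hXV
      have h3 : ∫ x in (-(L/2))..(L/2), f x = ∫ x in Set.Ioo (-(L/2)) (L/2), f x := by
        rw [intervalIntegral.integral_of_le (by linarith), integral_Ioc_eq_integral_Ioo]
      rw [hD_def]
      simp only [h3]
      linarith
    -- inner bound
    have hW : ∀ s ∈ Set.Ioc (0:ℝ) b,
        (∫ x in Set.Icc (-L) L, ‖V x‖ * Real.exp (s * |x|)) ≤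
          Real.exp (s * (L/2)) * A + Real.exp (s * L) * (2/L) ^ α * T := by
      intro s hs
      have hs0 : 0 < s := hs.1
      set g2 : ℝ → ℝ := fun x => Real.exp (s * (L/2)) * ‖V x‖ +
        Real.exp (s * L) * (2/L) ^ α * tail.indicator f x with hg2_def
      have hg2i1 : Integrable (fun x : ℝ => Real.exp (s * (L/2)) * ‖V x‖) :=
        hVnorm.const_mul _
      have hg2i2 : Integrable (fun x : ℝ =>
          Real.exp (s * L) * (2/L) ^ α * tail.indicator f x) :=
        (hXV.indicator hmt).const_mul _
      have hg2int : IntegrableOn g2 (Set.Icc (-L) L) := (hg2i1.add hg2i2).integrableOn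
      have hptw : ∀ x ∈ Set.Icc (-L) L, ‖‖V x‖ * Real.exp (s * |x|)‖ ≤ g2 x := by
        intro x hx
        rw [Real.norm_eq_abs, abs_of_nonneg (by positivity)]
        have hxL : |x| ≤ L := abs_le.2 ⟨hx.1, hx.2⟩
        by_cases hcase : |x| ≤ L/2
        · have h1 : ‖V x‖ * Real.exp (s * |x|) ≤ ‖V x‖ * Real.exp (s * (L/2)) := by
            gcongr
          have h2 : 0 ≤ Real.exp (s * L) * (2/L) ^ α * tail.indicator f x :=
            mul_nonneg (by positivity) (Set.indicator_nonneg (fun y _ => hf_nonneg y) x)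
          calc ‖V x‖ * Real.exp (s * |x|) ≤ ‖V x‖ * Real.exp (s * (L/2)) := h1
            _ = Real.exp (s * (L/2)) * ‖V x‖ := mul_comm _ _
            _ ≤ g2 x := le_add_of_nonneg_right h2
        · push_neg at hcase
          have hxtail : x ∈ tail := le_of_lt hcase
          have hind : tail.indicator f x = f x := Set.indicator_of_mem hxtail f
          have h1le : (1:ℝ) ≤ (2/L) ^ α * |x| ^ α := by
            rw [← Real.mul_rpow (by positivity) (abs_nonneg x)]
            refine Real.one_le_rpow ?_ hα
            rw [div_mul_eq_mul_div, le_div_iff₀ hL0]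
            linarith
          calc ‖V x‖ * Real.exp (s * |x|)
              ≤ ‖V x‖ * Real.exp (s * L) := by gcongr
            _ ≤ ((2/L) ^ α * |x| ^ α) * (‖V x‖ * Real.exp (s * L)) :=
                le_mul_of_one_le_left (by positivity) h1le
            _ = Real.exp (s * L) * (2/L) ^ α * (|x| ^ α * ‖V x‖) := by ring
            _ = Real.exp (s * L) * (2/L) ^ α * tail.indicator f x := by rw [hind]
            _ ≤ g2 x := le_add_of_nonneg_left (by positivity)
      have hWle : (∫ x in Set.Icc (-L) L, ‖V x‖ * Real.exp (s * |x|)) ≤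
          ∫ x in Set.Icc (-L) L, g2 x := by
        refine le_trans (le_abs_self _) ?_
        rw [← Real.norm_eq_abs]
        refine norm_integral_le_of_norm_le hg2int ?_
        exact (ae_restrict_mem measurableSet_Icc).mono hptw
      have hsplit : (∫ x in Set.Icc (-L) L, g2 x) =
          (∫ x in Set.Icc (-L) L, Real.exp (s * (L/2)) * ‖V x‖) +
          ∫ x in Set.Icc (-L) L, Real.exp (s * L) * (2/L) ^ α * tail.indicator f x :=
        integral_add hg2i1.integrableOn hg2i2.integrableOn
      have hterm1 : (∫ x in Set.Icc (-L) L, Real.exp (s * (L/2)) * ‖V x‖) ≤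
          Real.exp (s * (L/2)) * A := by
        rw [integral_const_mul]
        exact mul_le_mul_of_nonneg_left
          (setIntegral_le_integral hVnorm (Filter.Eventually.of_forall fun x => norm_nonneg _))
          (Real.exp_pos _).le
      have hterm2 : (∫ x in Set.Icc (-L) L,
          Real.exp (s * L) * (2/L) ^ α * tail.indicator f x) ≤
          Real.exp (s * L) * (2/L) ^ α * T := by
        rw [integral_const_mul]
        refine mul_le_mul_of_nonneg_left ?_ (by positivity)
        rw [setIntegral_indicator hmt]
        refine setIntegral_mono_set hXV.integrableOn
          (Filter.Eventually.of_forall hf_nonneg)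
          (HasSubset.Subset.eventuallyLE Set.inter_subset_right)
      calc (∫ x in Set.Icc (-L) L, ‖V x‖ * Real.exp (s * |x|))
          ≤ ∫ x in Set.Icc (-L) L, g2 x := hWle
        _ = _ + _ := hsplit
        _ ≤ Real.exp (s * (L/2)) * A + Real.exp (s * L) * (2/L) ^ α * T := by
            exact add_le_add hterm1 hterm2
    -- outer integrability
    have hIoi : IntegrableOn (fun s : ℝ => s ^ α * Real.exp (-(L/2) * s)) (Set.Ioi 0) := by
      have := integrableOn_rpow_mul_exp_neg_mul_rpow (by linarith : (-1:ℝ) < α)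
        one_pos (by linarith : (0:ℝ) < L/2)
      simpa [Real.rpow_one] using this
    have hIoc1 : IntegrableOn (fun s : ℝ => s ^ α * Real.exp (-(L/2) * s)) (Set.Ioc 0 b) :=
      hIoi.mono_set Set.Ioc_subset_Ioi_self
    have hIoc2 : IntegrableOn (fun s : ℝ => s ^ α) (Set.Ioc 0 b) :=
      (intervalIntegral.intervalIntegrable_rpow' (by linarith)).1
    set g : ℝ → ℝ := fun s => s ^ α * Real.exp (-(L/2) * s) * A +
      s ^ α * ((2/L) ^ α * T) with hg_def
    have hg_int : IntegrableOn g (Set.Ioc 0 b) :=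
      (hIoc1.mul_const A).add (hIoc2.mul_const _)
    -- outer pointwise bound
    have houter_ptw : ∀ s ∈ Set.Ioc (0:ℝ) b,
        ‖s ^ α * Real.exp (-L * s) * ∫ x in Set.Icc (-L) L, ‖V x‖ * Real.exp (s * |x|)‖
          ≤ g s := by
      intro s hs
      have hs0 : 0 < s := hs.1
      have hW0 : 0 ≤ ∫ x in Set.Icc (-L) L, ‖V x‖ * Real.exp (s * |x|) :=
        setIntegral_nonneg measurableSet_Icc fun x _ => by positivity
      rw [Real.norm_eq_abs, abs_of_nonneg
        (mul_nonneg (mul_nonneg (Real.rpow_nonneg hs0.le α) (Real.exp_pos _).le) hW0)]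
      have hbound := hW s hs
      have e1 : Real.exp (-L * s) * Real.exp (s * (L/2)) = Real.exp (-(L/2) * s) := by
        rw [← Real.exp_add]; congr 1; ring
      have e2 : Real.exp (-L * s) * Real.exp (s * L) = 1 := by
        rw [← Real.exp_add, show -L * s + s * L = 0 by ring, Real.exp_zero]
      calc s ^ α * Real.exp (-L * s) * ∫ x in Set.Icc (-L) L, ‖V x‖ * Real.exp (s * |x|)
          ≤ s ^ α * Real.exp (-L * s) *
            (Real.exp (s * (L/2)) * A + Real.exp (s * L) * (2/L) ^ α * T) := by
            gcongr
        _ = g s := by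
            rw [hg_def]
            linear_combination (s ^ α * A) * e1 + (s ^ α * ((2/L) ^ α * T)) * e2
    -- bound the outer integral
    have houter : (∫ s in Set.Ioc (0:ℝ) b, s ^ α * Real.exp (-L * s) *
        ∫ x in Set.Icc (-L) L, ‖V x‖ * Real.exp (s * |x|)) ≤ ∫ s in Set.Ioc (0:ℝ) b, g s := by
      refine le_trans (le_abs_self _) ?_
      rw [← Real.norm_eq_abs]
      exact norm_integral_le_of_norm_le hg_int
        ((ae_restrict_mem measurableSet_Ioc).mono houter_ptw)
    have hgsplit : (∫ s in Set.Ioc (0:ℝ) b, g s) =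
        (∫ s in Set.Ioc (0:ℝ) b, s ^ α * Real.exp (-(L/2) * s)) * A +
        (∫ s in Set.Ioc (0:ℝ) b, s ^ α) * ((2/L) ^ α * T) := by
      rw [hg_def]
      rw [integral_add (hIoc1.mul_const A) (hIoc2.mul_const _), integral_mul_const,
        integral_mul_const]
    have hI1 : (∫ s in Set.Ioc (0:ℝ) b, s ^ α * Real.exp (-(L/2) * s)) ≤ (2/L) ^ (α+1) * Γ := by
      have hmono : (∫ s in Set.Ioc (0:ℝ) b, s ^ α * Real.exp (-(L/2) * s)) ≤
          ∫ s in Set.Ioi (0:ℝ), s ^ α * Real.exp (-(L/2) * s) := by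
        refine setIntegral_mono_set hIoi ?_
          (HasSubset.Subset.eventuallyLE Set.Ioc_subset_Ioi_self)
        refine (ae_restrict_mem measurableSet_Ioi).mono fun s hs => ?_
        have : (0:ℝ) < s := hs
        positivity
      have heq : (∫ s in Set.Ioi (0:ℝ), s ^ α * Real.exp (-(L/2) * s)) =
          (1/(L/2)) ^ (α+1) * Γ := by
        have := Real.integral_rpow_mul_exp_neg_mul_Ioi
          (show (0:ℝ) < α + 1 by linarith) (show (0:ℝ) < L/2 by linarith)
        simpa [add_sub_cancel_right, neg_mul] using this
      calc (∫ s in Set.Ioc (0:ℝ) b, s ^ α * Real.exp (-(L/2) * s))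
          ≤ ∫ s in Set.Ioi (0:ℝ), s ^ α * Real.exp (-(L/2) * s) := hmono
        _ = (1/(L/2)) ^ (α+1) * Γ := heq
        _ = (2/L) ^ (α+1) * Γ := by rw [one_div_div]
    have hI2 : (∫ s in Set.Ioc (0:ℝ) b, s ^ α) ≤ b ^ α * b := by
      have h1 : (∫ s in Set.Ioc (0:ℝ) b, s ^ α) ≤ ∫ _ in Set.Ioc (0:ℝ) b, b ^ α := by
        refine setIntegral_mono_on hIoc2 (integrableOn_const measure_Ioc_lt_top.ne)
          measurableSet_Ioc fun x hx => Real.rpow_le_rpow hx.1.le hx.2 hα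
      rw [setIntegral_const, Real.volume_real_Ioc_of_le hb.le, smul_eq_mul] at h1
      exact h1.trans_eq (by ring)
    have hI1' : 0 ≤ ∫ s in Set.Ioc (0:ℝ) b, s ^ α * Real.exp (-(L/2) * s) :=
      setIntegral_nonneg measurableSet_Ioc fun s hs => by
        have : (0:ℝ) < s := hs.1
        positivity
    -- rpow algebra
    have hLne : L ^ α ≠ 0 := (Real.rpow_pos_of_pos hL0 α).ne'
    have ha2 : L ^ α * (2/L) ^ α = 2 ^ α := by
      rw [← Real.mul_rpow hL0.le (by positivity)]
      rw [mul_div_cancel₀ 2 hL0.ne']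
    have ha1 : L ^ α * (2/L) ^ (α+1) = 2 ^ (α+1) / L := by
      have h1 : (2/L) ^ (α+1) = (2/L) ^ α * (2/L) := by
        rw [Real.rpow_add_one (by positivity : (2:ℝ)/L ≠ 0)]
      have h2 : (2:ℝ) ^ (α+1) = 2 ^ α * 2 := by
        rw [Real.rpow_add_one (two_ne_zero)]
      rw [h1, h2]
      linear_combination (2/L) * ha2
    -- final chain
    calc L ^ α * ∫ s in Set.Ioc (0:ℝ) b, s ^ α * Real.exp (-L * s) *
          ∫ x in Set.Icc (-L) L, ‖V x‖ * Real.exp (s * |x|)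
        ≤ L ^ α * ∫ s in Set.Ioc (0:ℝ) b, g s := by gcongr
      _ = L ^ α * ((∫ s in Set.Ioc (0:ℝ) b, s ^ α * Real.exp (-(L/2) * s)) * A +
            (∫ s in Set.Ioc (0:ℝ) b, s ^ α) * ((2/L) ^ α * T)) := by rw [hgsplit]
      _ ≤ L ^ α * ((2/L) ^ (α+1) * Γ * A + (b ^ α * b) * ((2/L) ^ α * T)) := by
          gcongr
      _ = A * (2 ^ (α+1) * Γ) / L + C * T := by
          rw [hC_def]
          linear_combination (Γ * A) * ha1 + (b ^ α * b * T) * ha2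
      _ ≤ A * (2 ^ (α+1) * Γ) / L + C * D L := by gcongr
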